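/- The space of permitted colorings of the 4-simplex Δ⁴ = 12345 (the intersection of kernels of the ten edge functionals) is exactly the linear span of the ten edge vectors ψ_b, b ranging over the edges of Δ⁴. -/

import Mathlib

open Finset

/-- position (0-based) of vertex `v` in the increasing order of vertices of `t`. -/
def idx (t : Finset ℕ) (v : ℕ) : ℕ := (t.filter (· < v)).card

/-- coefficient rows of the constant edge functionals on a tetrahedron,
indexed by the (0-based) positions of the two vertices of the edge. -/
def phiRow : ℕ → ℕ → ℤ × ℤ
  | 0, 1 => (0, 1)
  | 0, 2 => (1, -1)
  | 0, 3 => (-1, 0)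
  | 1, 2 => (-1, 0)
  | 1, 3 => (1, 1)
  | 2, 3 => (0, -1)
  | _, _ => (0, 0)

/-- components of the constant edge vectors on a tetrahedron,
indexed by the (0-based) positions of the two vertices of the edge. -/
def psiRow : ℕ → ℕ → ℤ × ℤ
  | 0, 1 => (1, 0)
  | 0, 2 => (-1, 1)
  | 0, 3 => (0, -1)
  | 1, 2 => (0, -1)
  | 1, 3 => (1, 1)
  | 2, 3 => (-1, 0)
  | _, _ => (0, 0)

variable (F : Type) [Field F]

/-- the `x`-component of the color of tetrahedron `t`, as a linear functional. -/
noncomputable def evalX (t : Finset ℕ) : (Finset ℕ → F × F) →ₗ[F] F :=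
  (LinearMap.fst F F F).comp (LinearMap.proj (R := F) (φ := fun _ : Finset ℕ => F × F) t)

/-- the `y`-component of the color of tetrahedron `t`, as a linear functional. -/
noncomputable def evalY (t : Finset ℕ) : (Finset ℕ → F × F) →ₗ[F] F :=
  (LinearMap.snd F F F).comp (LinearMap.proj (R := F) (φ := fun _ : Finset ℕ => F × F) t)

/-- the edge functional `φ_{jk}` of the pentachoron `u`, as a linear functional
on colorings (the tetrahedron opposite vertex `i` contributes with sign `(-1)^(i+1)`,
`i` counted 1-based, i.e. `(-1)^(idx u i)`). -/
noncomputable def phiLin (u : Finset ℕ) (j k : ℕ) : (Finset ℕ → F × F) →ₗ[F] F :=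
  ∑ i ∈ u \ {j, k},
    ((-1 : F) ^ idx u i) •
      ((((phiRow (idx (u.erase i) j) (idx (u.erase i) k)).1 : F) • evalX F (u.erase i)) +
       (((phiRow (idx (u.erase i) j) (idx (u.erase i) k)).2 : F) • evalY F (u.erase i)))

/-- a coloring is permitted on the simplex with vertex set `S` if all edge functionals
of all pentachora (5-element subsets) of `S` annihilate it. -/
def Permitted (S : Finset ℕ) (c : Finset ℕ → F × F) : Prop :=
  ∀ u ⊆ S, u.card = 5 → ∀ j ∈ u, ∀ k ∈ u, j < k → phiLin F u j k c = 0

/-- a coloring is permitted on a cluster `P` of pentachora if all edge functionals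
of all pentachora of `P` annihilate it. -/
def PermittedOn (P : Finset (Finset ℕ)) (c : Finset ℕ → F × F) : Prop :=
  ∀ u ∈ P, ∀ j ∈ u, ∀ k ∈ u, j < k → phiLin F u j k c = 0

/-- the edge vector `ψ_{jk}` (for `j < k`). -/
def psiVec (j k : ℕ) (t : Finset ℕ) : F × F :=
  if j ∈ t ∧ k ∈ t then
    (((psiRow (idx t j) (idx t k)).1 : F), ((psiRow (idx t j) (idx t k)).2 : F))
  else 0

open Classical in
/-- the edge vector `ψ_{jk}` with support cut down to the tetrahedra in `T`. -/
noncomputable def psiC (T : Set (Finset ℕ)) (j k : ℕ) (t : Finset ℕ) : F × F :=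
  if t ∈ T then psiVec F j k t else 0

/-- the submodule of permitted colorings of the simplex with vertex set `S`. -/
noncomputable def PermittedSub (S : Finset ℕ) : Submodule F (Finset ℕ → F × F) :=
  ⨅ (u : Finset ℕ) (_ : u ⊆ S ∧ u.card = 5) (p : ℕ × ℕ)
    (_ : p.1 ∈ u ∧ p.2 ∈ u ∧ p.1 < p.2), LinearMap.ker (phiLin F u p.1 p.2)

/-- the submodule of permitted colorings of a cluster `P` of pentachora. -/
noncomputable def PermittedSubOn (P : Finset (Finset ℕ)) : Submodule F (Finset ℕ → F × F) :=
  ⨅ (u : Finset ℕ) (_ : u ∈ P) (p : ℕ × ℕ)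
    (_ : p.1 ∈ u ∧ p.2 ∈ u ∧ p.1 < p.2), LinearMap.ker (phiLin F u p.1 p.2)

/-- colorings supported on the set `T` of tetrahedra. -/
noncomputable def Supported (T : Set (Finset ℕ)) : Submodule F (Finset ℕ → F × F) :=
  ⨅ (t : Finset ℕ) (_ : t ∉ T),
    LinearMap.ker (LinearMap.proj (R := F) (φ := fun _ : Finset ℕ => F × F) t)

/-- the increasing map identifying vertices `1, …` of `Δⁿ` with the vertices of the
face of `Δ^{n+1}` omitting vertex `k`. -/
def dmap (k i : ℕ) : ℕ := if i < k then i else i + 1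

/-- restriction of a coloring of `Δ^{n+1}` onto its face omitting vertex `k`,
identified order-preservingly with `Δⁿ`. -/
def restr (k : ℕ) (c : Finset ℕ → F × F) : Finset ℕ → F × F :=
  fun t => c (t.image (dmap k))

/-- the hexagon coboundary of an `n`-cochain (a function on colorings of `Δⁿ`). -/
noncomputable def hexδ (n : ℕ) (c : (Finset ℕ → F × F) → F) :
    (Finset ℕ → F × F) → F :=
  fun y => ∑ k ∈ Finset.Icc 1 (n + 2), (-1 : F) ^ (k + 1) * c (restr F k y)

section
variable (F : Type) [Field F]

def phiZ (u : Finset ℕ) (j k : ℕ) (z : Finset ℕ → ℤ × ℤ) : ℤ :=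
  ∑ i ∈ u \ {j, k}, (-1 : ℤ) ^ (idx u i) *
    ((phiRow (idx (u.erase i) j) (idx (u.erase i) k)).1 * (z (u.erase i)).1 +
     (phiRow (idx (u.erase i) j) (idx (u.erase i) k)).2 * (z (u.erase i)).2)

def psiZ (j k : ℕ) (t : Finset ℕ) : ℤ × ℤ :=
  if j ∈ t ∧ k ∈ t ∧ t ⊆ Icc 1 5 ∧ t.card = 4 then psiRow (idx t j) (idx t k) else 0

set_option maxRecDepth 40000 in
lemma key : ∀ p ∈ Icc 1 5, ∀ q ∈ Icc 1 5, ∀ j ∈ Icc 1 5, ∀ k ∈ Icc 1 5,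
    phiZ (Icc 1 5) p q (psiZ j k) = 0 := by decide

lemma phiLin_apply (u : Finset ℕ) (j k : ℕ) (c : Finset ℕ → F × F) :
    phiLin F u j k c = ∑ i ∈ u \ {j, k}, (-1 : F) ^ (idx u i) *
      (((phiRow (idx (u.erase i) j) (idx (u.erase i) k)).1 : F) * (c (u.erase i)).1 +
       ((phiRow (idx (u.erase i) j) (idx (u.erase i) k)).2 : F) * (c (u.erase i)).2) := by
  unfold phiLin
  rw [LinearMap.sum_apply]
  refine Finset.sum_congr rfl fun i _ => ?_
  simp [evalX, evalY, smul_eq_mul]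
  ring

lemma phiLin_cast (u : Finset ℕ) (j k : ℕ) (z : Finset ℕ → ℤ × ℤ) :
    phiLin F u j k (fun t => (((z t).1 : F), ((z t).2 : F))) = ((phiZ u j k z : ℤ) : F) := by
  rw [phiLin_apply]
  unfold phiZ
  push_cast
  rfl

lemma psiC_eq (j k : ℕ) (t : Finset ℕ) :
    psiC F {t | t ⊆ Icc 1 5 ∧ t.card = 4} j k t
      = (((psiZ j k t).1 : F), ((psiZ j k t).2 : F)) := by
  classical
  simp only [psiC, psiZ, psiVec, Set.mem_setOf_eq]
  by_cases h1 : t ⊆ Icc 1 5 ∧ t.card = 4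
  · rw [if_pos h1]
    by_cases h2 : j ∈ t ∧ k ∈ t
    · rw [if_pos h2, if_pos ⟨h2.1, h2.2, h1.1, h1.2⟩]
    · rw [if_neg h2, if_neg (fun h => h2 ⟨h.1, h.2.1⟩)]; simp; rfl
  · rw [if_neg h1, if_neg (fun h => h1 ⟨h.2.2.1, h.2.2.2⟩)]; simp; rfl
lemma phiE12 (c : Finset ℕ → F × F) :
    phiLin F (Icc 1 5) 1 2 c = (c ({1,2,4,5} : Finset ℕ)).2 - (c ({1,2,3,5} : Finset ℕ)).2 + (c ({1,2,3,4} : Finset ℕ)).2 := by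
  rw [phiLin_apply]
  rw [show (Icc 1 5 : Finset ℕ) \ {1, 2} = ({3,4,5} : Finset ℕ) from by decide]
  rw [Finset.sum_insert (by decide), Finset.sum_insert (by decide), Finset.sum_singleton]
  simp only [show ((Icc 1 5 : Finset ℕ).erase 3) = ({1,2,4,5} : Finset ℕ) from by decide, show idx (Icc 1 5 : Finset ℕ) 3 = 2 from by decide, show idx ({1,2,4,5} : Finset ℕ) 1 = 0 from by decide, show idx ({1,2,4,5} : Finset ℕ) 2 = 1 from by decide, show (phiRow 0 1).1 = 0 from by decide, show (phiRow 0 1).2 = 1 from by decide, show ((Icc 1 5 : Finset ℕ).erase 4) = ({1,2,3,5} : Finset ℕ) from by decide, show idx (Icc 1 5 : Finset ℕ) 4 = 3 from by decide, show idx ({1,2,3,5} : Finset ℕ) 1 = 0 from by decide, show idx ({1,2,3,5} : Finset ℕ) 2 = 1 from by decide, show ((Icc 1 5 : Finset ℕ).erase 5) = ({1,2,3,4} : Finset ℕ) from by decide, show idx (Icc 1 5 : Finset ℕ) 5 = 4 from by decide, show idx ({1,2,3,4} : Finset ℕ) 1 = 0 from by decide, show idx ({1,2,3,4} : Finset ℕ)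 2 = 1 from by decide]
  push_cast
  ring

lemma phiE13 (c : Finset ℕ → F × F) :
    phiLin F (Icc 1 5) 1 3 c = -(c ({1,3,4,5} : Finset ℕ)).2 - (c ({1,2,3,5} : Finset ℕ)).1 + (c ({1,2,3,5} : Finset ℕ)).2 + (c ({1,2,3,4} : Finset ℕ)).1 - (c ({1,2,3,4} : Finset ℕ)).2 := by
  rw [phiLin_apply]
  rw [show (Icc 1 5 : Finset ℕ) \ {1, 3} = ({2,4,5} : Finset ℕ) from by decide]
  rw [Finset.sum_insert (by decide), Finset.sum_insert (by decide), Finset.sum_singleton]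
  simp only [show ((Icc 1 5 : Finset ℕ).erase 2) = ({1,3,4,5} : Finset ℕ) from by decide, show idx (Icc 1 5 : Finset ℕ) 2 = 1 from by decide, show idx ({1,3,4,5} : Finset ℕ) 1 = 0 from by decide, show idx ({1,3,4,5} : Finset ℕ) 3 = 1 from by decide, show (phiRow 0 1).1 = 0 from by decide, show (phiRow 0 1).2 = 1 from by decide, show ((Icc 1 5 : Finset ℕ).erase 4) = ({1,2,3,5} : Finset ℕ) from by decide, show idx (Icc 1 5 : Finset ℕ) 4 = 3 from by decide, show idx ({1,2,3,5} : Finset ℕ) 1 = 0 from by decide, show idx ({1,2,3,5} : Finset ℕ) 3 = 2 from by decide, show (phiRow 0 2).1 = 1 from by decide, show (phiRow 0 2).2 = -1 from by decide, show ((Icc 1 5 : Finset ℕ).erase 5) = ({1,2,3,4} : Finset ℕ) from by decide, show idx (Icc 1 5 : Finset ℕ) 5 = 4 from by decide, show idx ({1,2,3,4} : Finset ℕ) 1 = 0 from by decide, show idx ({1,2,3,4} : Finset ℕ) 3 = 2 from by decide]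
  push_cast
  ring

lemma phiE14 (c : Finset ℕ → F × F) :
    phiLin F (Icc 1 5) 1 4 c = -(c ({1,3,4,5} : Finset ℕ)).1 + (c ({1,3,4,5} : Finset ℕ)).2 + (c ({1,2,4,5} : Finset ℕ)).1 - (c ({1,2,4,5} : Finset ℕ)).2 - (c ({1,2,3,4} : Finset ℕ)).1 := by
  rw [phiLin_apply]
  rw [show (Icc 1 5 : Finset ℕ) \ {1, 4} = ({2,3,5} : Finset ℕ) from by decide]
  rw [Finset.sum_insert (by decide), Finset.sum_insert (by decide), Finset.sum_singleton]
  simp only [show ((Icc 1 5 : Finset ℕ).erase 2) = ({1,3,4,5} : Finset ℕ) from by decide, show idx (Icc 1 5 : Finset ℕ) 2 = 1 from by decide, show idx ({1,3,4,5} : Finset ℕ) 1 = 0 from by decide, show idx ({1,3,4,5} : Finset ℕ) 4 = 2 from by decide, show (phiRow 0 2).1 = 1 from by decide, show (phiRow 0 2).2 = -1 from by decide, show ((Icc 1 5 : Finset ℕ).erase 3) = ({1,2,4,5} : Finset ℕ) from by decide, show idx (Icc 1 5 : Finset ℕ) 3 = 2 from by decide, show idx ({1,2,4,5} : Finset ℕ)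 1 = 0 from by decide, show idx ({1,2,4,5} : Finset ℕ) 4 = 2 from by decide, show ((Icc 1 5 : Finset ℕ).erase 5) = ({1,2,3,4} : Finset ℕ) from by decide, show idx (Icc 1 5 : Finset ℕ) 5 = 4 from by decide, show idx ({1,2,3,4} : Finset ℕ) 1 = 0 from by decide, show idx ({1,2,3,4} : Finset ℕ) 4 = 3 from by decide, show (phiRow 0 3).1 = -1 from by decide, show (phiRow 0 3).2 = 0 from by decide]
  push_cast
  ring

lemma phiE15 (c : Finset ℕ → F × F) :
    phiLin F (Icc 1 5) 1 5 c = (c ({1,3,4,5} : Finset ℕ)).1 - (c ({1,2,4,5} : Finset ℕ)).1 + (c ({1,2,3,5} : Finset ℕ)).1 := by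
  rw [phiLin_apply]
  rw [show (Icc 1 5 : Finset ℕ) \ {1, 5} = ({2,3,4} : Finset ℕ) from by decide]
  rw [Finset.sum_insert (by decide), Finset.sum_insert (by decide), Finset.sum_singleton]
  simp only [show ((Icc 1 5 : Finset ℕ).erase 2) = ({1,3,4,5} : Finset ℕ) from by decide, show idx (Icc 1 5 : Finset ℕ) 2 = 1 from by decide, show idx ({1,3,4,5} : Finset ℕ) 1 = 0 from by decide, show idx ({1,3,4,5} : Finset ℕ) 5 = 3 from by decide, show (phiRow 0 3).1 = -1 from by decide, show (phiRow 0 3).2 = 0 from by decide, show ((Icc 1 5 : Finset ℕ).erase 3) = ({1,2,4,5} : Finset ℕ) from by decide, show idx (Icc 1 5 : Finset ℕ) 3 = 2 from by decide, show idx ({1,2,4,5} : Finset ℕ) 1 = 0 from by decide, show idx ({1,2,4,5} : Finset ℕ) 5 = 3 from by decide, show ((Icc 1 5 : Finset ℕ).erase 4) = ({1,2,3,5} : Finset ℕ) from by decide, show idx (Icc 1 5 : Finset ℕ) 4 = 3 from by decide, show idx ({1,2,3,5} : Finset ℕ) 1 = 0 from by decide, show idx ({1,2,3,5} : Finset ℕ)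 5 = 3 from by decide]
  push_cast
  ring

lemma phiE23 (c : Finset ℕ → F × F) :
    phiLin F (Icc 1 5) 2 3 c = (c ({2,3,4,5} : Finset ℕ)).2 + (c ({1,2,3,5} : Finset ℕ)).1 - (c ({1,2,3,4} : Finset ℕ)).1 := by
  rw [phiLin_apply]
  rw [show (Icc 1 5 : Finset ℕ) \ {2, 3} = ({1,4,5} : Finset ℕ) from by decide]
  rw [Finset.sum_insert (by decide), Finset.sum_insert (by decide), Finset.sum_singleton]
  simp only [show ((Icc 1 5 : Finset ℕ).erase 1) = ({2,3,4,5} : Finset ℕ) from by decide, show idx (Icc 1 5 : Finset ℕ) 1 = 0 from by decide, show idx ({2,3,4,5} : Finset ℕ) 2 = 0 from by decide, show idx ({2,3,4,5} : Finset ℕ) 3 = 1 from by decide, show (phiRow 0 1).1 = 0 from by decide, show (phiRow 0 1).2 = 1 from by decide, show ((Icc 1 5 : Finset ℕ).erase 4) = ({1,2,3,5} : Finset ℕ) from by decide, show idx (Icc 1 5 : Finset ℕ) 4 = 3 from by decide, show idx ({1,2,3,5} : Finset ℕ) 2 = 1 from by decide, show idx ({1,2,3,5} : Finset ℕ) 3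 = 2 from by decide, show (phiRow 1 2).1 = -1 from by decide, show (phiRow 1 2).2 = 0 from by decide, show ((Icc 1 5 : Finset ℕ).erase 5) = ({1,2,3,4} : Finset ℕ) from by decide, show idx (Icc 1 5 : Finset ℕ) 5 = 4 from by decide, show idx ({1,2,3,4} : Finset ℕ) 2 = 1 from by decide, show idx ({1,2,3,4} : Finset ℕ) 3 = 2 from by decide]
  push_cast
  ring

lemma phiE24 (c : Finset ℕ → F × F) :
    phiLin F (Icc 1 5) 2 4 c = (c ({2,3,4,5} : Finset ℕ)).1 - (c ({2,3,4,5} : Finset ℕ)).2 - (c ({1,2,4,5} : Finset ℕ)).1 + (c ({1,2,3,4} : Finset ℕ)).1 + (c ({1,2,3,4} : Finset ℕ)).2 := by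
  rw [phiLin_apply]
  rw [show (Icc 1 5 : Finset ℕ) \ {2, 4} = ({1,3,5} : Finset ℕ) from by decide]
  rw [Finset.sum_insert (by decide), Finset.sum_insert (by decide), Finset.sum_singleton]
  simp only [show ((Icc 1 5 : Finset ℕ).erase 1) = ({2,3,4,5} : Finset ℕ) from by decide, show idx (Icc 1 5 : Finset ℕ) 1 = 0 from by decide, show idx ({2,3,4,5} : Finset ℕ) 2 = 0 from by decide, show idx ({2,3,4,5} : Finset ℕ) 4 = 2 from by decide, show (phiRow 0 2).1 = 1 from by decide, show (phiRow 0 2).2 = -1 from by decide, show ((Icc 1 5 : Finset ℕ).erase 3) = ({1,2,4,5} : Finset ℕ) from by decide, show idx (Icc 1 5 : Finset ℕ) 3 = 2 from by decide, show idx ({1,2,4,5} : Finset ℕ) 2 = 1 from by decide, show idx ({1,2,4,5} : Finset ℕ) 4 = 2 from by decide, show (phiRow 1 2).1 = -1 from by decide, show (phiRow 1 2).2 = 0 from by decide, show ((Icc 1 5 : Finset ℕ).erase 5) = ({1,2,3,4} : Finset ℕ) from by decide, show idx (Icc 1 5 : Finset ℕ) 5 = 4 from by decide, show idx ({1,2,3,4}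 : Finset ℕ) 2 = 1 from by decide, show idx ({1,2,3,4} : Finset ℕ) 4 = 3 from by decide, show (phiRow 1 3).1 = 1 from by decide, show (phiRow 1 3).2 = 1 from by decide]
  push_cast
  ring

lemma phiE25 (c : Finset ℕ → F × F) :
    phiLin F (Icc 1 5) 2 5 c = -(c ({2,3,4,5} : Finset ℕ)).1 + (c ({1,2,4,5} : Finset ℕ)).1 + (c ({1,2,4,5} : Finset ℕ)).2 - (c ({1,2,3,5} : Finset ℕ)).1 - (c ({1,2,3,5} : Finset ℕ)).2 := by
  rw [phiLin_apply]
  rw [show (Icc 1 5 : Finset ℕ) \ {2, 5} = ({1,3,4} : Finset ℕ) from by decide]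
  rw [Finset.sum_insert (by decide), Finset.sum_insert (by decide), Finset.sum_singleton]
  simp only [show ((Icc 1 5 : Finset ℕ).erase 1) = ({2,3,4,5} : Finset ℕ) from by decide, show idx (Icc 1 5 : Finset ℕ) 1 = 0 from by decide, show idx ({2,3,4,5} : Finset ℕ) 2 = 0 from by decide, show idx ({2,3,4,5} : Finset ℕ) 5 = 3 from by decide, show (phiRow 0 3).1 = -1 from by decide, show (phiRow 0 3).2 = 0 from by decide, show ((Icc 1 5 : Finset ℕ).erase 3) = ({1,2,4,5} : Finset ℕ) from by decide, show idx (Icc 1 5 : Finset ℕ) 3 = 2 from by decide, show idx ({1,2,4,5} : Finset ℕ) 2 = 1 from by decide, show idx ({1,2,4,5} : Finset ℕ) 5 = 3 from by decide, show (phiRow 1 3).1 = 1 from by decide, show (phiRow 1 3).2 = 1 from by decide, show ((Icc 1 5 : Finset ℕ).erase 4) = ({1,2,3,5} : Finset ℕ) from by decide, show idx (Icc 1 5 : Finset ℕ) 4 = 3 from by decide, show idx ({1,2,3,5} : Finset ℕ) 2 = 1 from by decide, show idx ({1,2,3,5} : Finset ℕ) 5 = 3 from by decide]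
  push_cast
  ring

lemma phiE34 (c : Finset ℕ → F × F) :
    phiLin F (Icc 1 5) 3 4 c = -(c ({2,3,4,5} : Finset ℕ)).1 + (c ({1,3,4,5} : Finset ℕ)).1 - (c ({1,2,3,4} : Finset ℕ)).2 := by
  rw [phiLin_apply]
  rw [show (Icc 1 5 : Finset ℕ) \ {3, 4} = ({1,2,5} : Finset ℕ) from by decide]
  rw [Finset.sum_insert (by decide), Finset.sum_insert (by decide), Finset.sum_singleton]
  simp only [show ((Icc 1 5 : Finset ℕ).erase 1) = ({2,3,4,5} : Finset ℕ) from by decide, show idx (Icc 1 5 : Finset ℕ) 1 = 0 from by decide, show idx ({2,3,4,5} : Finset ℕ) 3 = 1 from by decide, show idx ({2,3,4,5} : Finset ℕ) 4 = 2 from by decide, show (phiRow 1 2).1 = -1 from by decide, show (phiRow 1 2).2 = 0 from by decide, show ((Icc 1 5 : Finset ℕ).erase 2) = ({1,3,4,5} : Finset ℕ) from by decide, show idx (Icc 1 5 : Finset ℕ) 2 = 1 from by decide, show idx ({1,3,4,5} : Finset ℕ) 3 = 1 from by decide, show idx ({1,3,4,5} : Finset ℕ) 4 = 2 from by decide, show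 ((Icc 1 5 : Finset ℕ).erase 5) = ({1,2,3,4} : Finset ℕ) from by decide, show idx (Icc 1 5 : Finset ℕ) 5 = 4 from by decide, show idx ({1,2,3,4} : Finset ℕ) 3 = 2 from by decide, show idx ({1,2,3,4} : Finset ℕ) 4 = 3 from by decide, show (phiRow 2 3).1 = 0 from by decide, show (phiRow 2 3).2 = -1 from by decide]
  push_cast
  ring

lemma phiE35 (c : Finset ℕ → F × F) :
    phiLin F (Icc 1 5) 3 5 c = (c ({2,3,4,5} : Finset ℕ)).1 + (c ({2,3,4,5} : Finset ℕ)).2 - (c ({1,3,4,5} : Finset ℕ)).1 - (c ({1,3,4,5} : Finset ℕ)).2 + (c ({1,2,3,5} : Finset ℕ)).2 := by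
  rw [phiLin_apply]
  rw [show (Icc 1 5 : Finset ℕ) \ {3, 5} = ({1,2,4} : Finset ℕ) from by decide]
  rw [Finset.sum_insert (by decide), Finset.sum_insert (by decide), Finset.sum_singleton]
  simp only [show ((Icc 1 5 : Finset ℕ).erase 1) = ({2,3,4,5} : Finset ℕ) from by decide, show idx (Icc 1 5 : Finset ℕ) 1 = 0 from by decide, show idx ({2,3,4,5} : Finset ℕ) 3 = 1 from by decide, show idx ({2,3,4,5} : Finset ℕ) 5 = 3 from by decide, show (phiRow 1 3).1 = 1 from by decide, show (phiRow 1 3).2 = 1 from by decide, show ((Icc 1 5 : Finset ℕ).erase 2) = ({1,3,4,5} : Finset ℕ) from by decide, show idx (Icc 1 5 : Finset ℕ) 2 = 1 from by decide, show idx ({1,3,4,5} : Finset ℕ) 3 = 1 from by decide, show idx ({1,3,4,5} : Finset ℕ) 5 = 3 from by decide, show ((Icc 1 5 : Finset ℕ).erase 4) = ({1,2,3,5} : Finset ℕ) from by decide, show idx (Icc 1 5 : Finset ℕ) 4 = 3 from by decide, show idx ({1,2,3,5} : Finset ℕ) 3 = 2 from by decide, show idx ({1,2,3,5} : Finset ℕ)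 5 = 3 from by decide, show (phiRow 2 3).1 = 0 from by decide, show (phiRow 2 3).2 = -1 from by decide]
  push_cast
  ring

lemma phiE45 (c : Finset ℕ → F × F) :
    phiLin F (Icc 1 5) 4 5 c = -(c ({2,3,4,5} : Finset ℕ)).2 + (c ({1,3,4,5} : Finset ℕ)).2 - (c ({1,2,4,5} : Finset ℕ)).2 := by
  rw [phiLin_apply]
  rw [show (Icc 1 5 : Finset ℕ) \ {4, 5} = ({1,2,3} : Finset ℕ) from by decide]
  rw [Finset.sum_insert (by decide), Finset.sum_insert (by decide), Finset.sum_singleton]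
  simp only [show ((Icc 1 5 : Finset ℕ).erase 1) = ({2,3,4,5} : Finset ℕ) from by decide, show idx (Icc 1 5 : Finset ℕ) 1 = 0 from by decide, show idx ({2,3,4,5} : Finset ℕ) 4 = 2 from by decide, show idx ({2,3,4,5} : Finset ℕ) 5 = 3 from by decide, show (phiRow 2 3).1 = 0 from by decide, show (phiRow 2 3).2 = -1 from by decide, show ((Icc 1 5 : Finset ℕ).erase 2) = ({1,3,4,5} : Finset ℕ) from by decide, show idx (Icc 1 5 : Finset ℕ) 2 = 1 from by decide, show idx ({1,3,4,5} : Finset ℕ) 4 = 2 from by decide, show idx ({1,3,4,5} : Finset ℕ) 5 = 3 from by decide, show ((Icc 1 5 : Finset ℕ).erase 3) = ({1,2,4,5} : Finset ℕ) from by decide, show idx (Icc 1 5 : Finset ℕ) 3 = 2 from by decide, show idx ({1,2,4,5} : Finset ℕ) 4 = 2 from by decide, show idx ({1,2,4,5} : Finset ℕ) 5 = 3 from by decide]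
  push_cast
  ring

lemma pv12_1 :
    psiC F {t | t ⊆ Icc 1 5 ∧ t.card = 4} 1 2 ({2,3,4,5} : Finset ℕ) = ((0 : F), (0 : F)) := by
  rw [psiC_eq]
  norm_num [show psiZ 1 2 ({2,3,4,5} : Finset ℕ) = (0, 0) from by decide]

lemma pv12_2 :
    psiC F {t | t ⊆ Icc 1 5 ∧ t.card = 4} 1 2 ({1,3,4,5} : Finset ℕ) = ((0 : F), (0 : F)) := by
  rw [psiC_eq]
  norm_num [show psiZ 1 2 ({1,3,4,5} : Finset ℕ) = (0, 0) from by decide]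

lemma pv12_3 :
    psiC F {t | t ⊆ Icc 1 5 ∧ t.card = 4} 1 2 ({1,2,4,5} : Finset ℕ) = ((1 : F), (0 : F)) := by
  rw [psiC_eq]
  norm_num [show psiZ 1 2 ({1,2,4,5} : Finset ℕ) = (1, 0) from by decide]

lemma pv12_4 :
    psiC F {t | t ⊆ Icc 1 5 ∧ t.card = 4} 1 2 ({1,2,3,5} : Finset ℕ) = ((1 : F), (0 : F)) := by
  rw [psiC_eq]
  norm_num [show psiZ 1 2 ({1,2,3,5} : Finset ℕ) = (1, 0) from by decide]

lemma pv12_5 :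
    psiC F {t | t ⊆ Icc 1 5 ∧ t.card = 4} 1 2 ({1,2,3,4} : Finset ℕ) = ((1 : F), (0 : F)) := by
  rw [psiC_eq]
  norm_num [show psiZ 1 2 ({1,2,3,4} : Finset ℕ) = (1, 0) from by decide]

lemma pv14_1 :
    psiC F {t | t ⊆ Icc 1 5 ∧ t.card = 4} 1 4 ({2,3,4,5} : Finset ℕ) = ((0 : F), (0 : F)) := by
  rw [psiC_eq]
  norm_num [show psiZ 1 4 ({2,3,4,5} : Finset ℕ) = (0, 0) from by decide]

lemma pv14_2 :
    psiC F {t | t ⊆ Icc 1 5 ∧ t.card = 4} 1 4 ({1,3,4,5} : Finset ℕ) = ((-1 : F), (1 : F)) := by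
  rw [psiC_eq]
  norm_num [show psiZ 1 4 ({1,3,4,5} : Finset ℕ) = (-1, 1) from by decide]

lemma pv14_3 :
    psiC F {t | t ⊆ Icc 1 5 ∧ t.card = 4} 1 4 ({1,2,4,5} : Finset ℕ) = ((-1 : F), (1 : F)) := by
  rw [psiC_eq]
  norm_num [show psiZ 1 4 ({1,2,4,5} : Finset ℕ) = (-1, 1) from by decide]

lemma pv14_4 :
    psiC F {t | t ⊆ Icc 1 5 ∧ t.card = 4} 1 4 ({1,2,3,5} : Finset ℕ) = ((0 : F), (0 : F)) := by
  rw [psiC_eq]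
  norm_num [show psiZ 1 4 ({1,2,3,5} : Finset ℕ) = (0, 0) from by decide]

lemma pv14_5 :
    psiC F {t | t ⊆ Icc 1 5 ∧ t.card = 4} 1 4 ({1,2,3,4} : Finset ℕ) = ((0 : F), (-1 : F)) := by
  rw [psiC_eq]
  norm_num [show psiZ 1 4 ({1,2,3,4} : Finset ℕ) = (0, -1) from by decide]

lemma pv15_1 :
    psiC F {t | t ⊆ Icc 1 5 ∧ t.card = 4} 1 5 ({2,3,4,5} : Finset ℕ) = ((0 : F), (0 : F)) := by
  rw [psiC_eq]
  norm_num [show psiZ 1 5 ({2,3,4,5} : Finset ℕ) = (0, 0) from by decide]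

lemma pv15_2 :
    psiC F {t | t ⊆ Icc 1 5 ∧ t.card = 4} 1 5 ({1,3,4,5} : Finset ℕ) = ((0 : F), (-1 : F)) := by
  rw [psiC_eq]
  norm_num [show psiZ 1 5 ({1,3,4,5} : Finset ℕ) = (0, -1) from by decide]

lemma pv15_3 :
    psiC F {t | t ⊆ Icc 1 5 ∧ t.card = 4} 1 5 ({1,2,4,5} : Finset ℕ) = ((0 : F), (-1 : F)) := by
  rw [psiC_eq]
  norm_num [show psiZ 1 5 ({1,2,4,5} : Finset ℕ) = (0, -1) from by decide]

lemma pv15_4 :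
    psiC F {t | t ⊆ Icc 1 5 ∧ t.card = 4} 1 5 ({1,2,3,5} : Finset ℕ) = ((0 : F), (-1 : F)) := by
  rw [psiC_eq]
  norm_num [show psiZ 1 5 ({1,2,3,5} : Finset ℕ) = (0, -1) from by decide]

lemma pv15_5 :
    psiC F {t | t ⊆ Icc 1 5 ∧ t.card = 4} 1 5 ({1,2,3,4} : Finset ℕ) = ((0 : F), (0 : F)) := by
  rw [psiC_eq]
  norm_num [show psiZ 1 5 ({1,2,3,4} : Finset ℕ) = (0, 0) from by decide]

lemma pv23_1 :
    psiC F {t | t ⊆ Icc 1 5 ∧ t.card = 4} 2 3 ({2,3,4,5} : Finset ℕ) = ((1 : F), (0 : F)) := by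
  rw [psiC_eq]
  norm_num [show psiZ 2 3 ({2,3,4,5} : Finset ℕ) = (1, 0) from by decide]

lemma pv23_2 :
    psiC F {t | t ⊆ Icc 1 5 ∧ t.card = 4} 2 3 ({1,3,4,5} : Finset ℕ) = ((0 : F), (0 : F)) := by
  rw [psiC_eq]
  norm_num [show psiZ 2 3 ({1,3,4,5} : Finset ℕ) = (0, 0) from by decide]

lemma pv23_3 :
    psiC F {t | t ⊆ Icc 1 5 ∧ t.card = 4} 2 3 ({1,2,4,5} : Finset ℕ) = ((0 : F), (0 : F)) := by
  rw [psiC_eq]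
  norm_num [show psiZ 2 3 ({1,2,4,5} : Finset ℕ) = (0, 0) from by decide]

lemma pv23_4 :
    psiC F {t | t ⊆ Icc 1 5 ∧ t.card = 4} 2 3 ({1,2,3,5} : Finset ℕ) = ((0 : F), (-1 : F)) := by
  rw [psiC_eq]
  norm_num [show psiZ 2 3 ({1,2,3,5} : Finset ℕ) = (0, -1) from by decide]

lemma pv23_5 :
    psiC F {t | t ⊆ Icc 1 5 ∧ t.card = 4} 2 3 ({1,2,3,4} : Finset ℕ) = ((0 : F), (-1 : F)) := by
  rw [psiC_eq]
  norm_num [show psiZ 2 3 ({1,2,3,4} : Finset ℕ) = (0, -1) from by decide]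

lemma pv24_1 :
    psiC F {t | t ⊆ Icc 1 5 ∧ t.card = 4} 2 4 ({2,3,4,5} : Finset ℕ) = ((-1 : F), (1 : F)) := by
  rw [psiC_eq]
  norm_num [show psiZ 2 4 ({2,3,4,5} : Finset ℕ) = (-1, 1) from by decide]

lemma pv24_2 :
    psiC F {t | t ⊆ Icc 1 5 ∧ t.card = 4} 2 4 ({1,3,4,5} : Finset ℕ) = ((0 : F), (0 : F)) := by
  rw [psiC_eq]
  norm_num [show psiZ 2 4 ({1,3,4,5} : Finset ℕ) = (0, 0) from by decide]

lemma pv24_3 :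
    psiC F {t | t ⊆ Icc 1 5 ∧ t.card = 4} 2 4 ({1,2,4,5} : Finset ℕ) = ((0 : F), (-1 : F)) := by
  rw [psiC_eq]
  norm_num [show psiZ 2 4 ({1,2,4,5} : Finset ℕ) = (0, -1) from by decide]

lemma pv24_4 :
    psiC F {t | t ⊆ Icc 1 5 ∧ t.card = 4} 2 4 ({1,2,3,5} : Finset ℕ) = ((0 : F), (0 : F)) := by
  rw [psiC_eq]
  norm_num [show psiZ 2 4 ({1,2,3,5} : Finset ℕ) = (0, 0) from by decide]

lemma pv24_5 :
    psiC F {t | t ⊆ Icc 1 5 ∧ t.card = 4} 2 4 ({1,2,3,4} : Finset ℕ) = ((1 : F), (1 : F)) := by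
  rw [psiC_eq]
  norm_num [show psiZ 2 4 ({1,2,3,4} : Finset ℕ) = (1, 1) from by decide]
/-- the permitted colorings of `Δ⁴ = 12345` are exactly the linear span of
the ten edge vectors `ψ_b`, `b` an edge of `Δ⁴`. -/
theorem permitted_eq_span_edge_vectors :
    Submodule.span F
        {w : Finset ℕ → F × F |
          ∃ j ∈ Icc (1 : ℕ) 5, ∃ k ∈ Icc (1 : ℕ) 5, j < k ∧
            w = psiC F {t | t ⊆ Icc 1 5 ∧ t.card = 4} j k}
      = PermittedSub F (Icc 1 5) ⊓ Supported F {t | t ⊆ Icc 1 5 ∧ t.card = 4} := by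
  classical
  apply le_antisymm
  · rw [Submodule.span_le]
    rintro w ⟨j, hj, k, hk, hjk, rfl⟩
    rw [SetLike.mem_coe, Submodule.mem_inf]
    constructor
    · simp only [PermittedSub, Submodule.mem_iInf, LinearMap.mem_ker]
      rintro u ⟨hu1, hu2⟩ ⟨p, q⟩ ⟨hp, hq, hpq⟩
      have hu : u = Icc 1 5 :=
        Finset.eq_of_subset_of_card_le hu1 (by rw [hu2]; decide)
      subst hu
      rw [show psiC F {t | t ⊆ Icc 1 5 ∧ t.card = 4} j k
            = fun t => (((psiZ j k t).1 : F), ((psiZ j k t).2 : F)) from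
          funext (psiC_eq F j k)]
      rw [phiLin_cast, key p hp q hq j hj k hk, Int.cast_zero]
    · simp only [Supported, Submodule.mem_iInf, LinearMap.mem_ker]
      intro t ht
      show psiC F {t | t ⊆ Icc 1 5 ∧ t.card = 4} j k t = 0
      rw [psiC, if_neg ht]
  · rintro c hc
    rw [Submodule.mem_inf] at hc
    obtain ⟨hperm, hsupp⟩ := hc
    simp only [PermittedSub, Submodule.mem_iInf, LinearMap.mem_ker] at hperm
    simp only [Supported, Submodule.mem_iInf, LinearMap.mem_ker,
      LinearMap.proj_apply] at hsupp
    have E12 : (c ({1,2,4,5} : Finset ℕ)).2 - (c ({1,2,3,5} : Finset ℕ)).2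
        + (c ({1,2,3,4} : Finset ℕ)).2 = 0 := by
      have h := hperm (Icc 1 5) ⟨subset_rfl, by decide⟩ (1, 2)
        ⟨by decide, by decide, by decide⟩
      rwa [phiE12] at h
    have E13 : -(c ({1,3,4,5} : Finset ℕ)).2 - (c ({1,2,3,5} : Finset ℕ)).1
        + (c ({1,2,3,5} : Finset ℕ)).2 + (c ({1,2,3,4} : Finset ℕ)).1
        - (c ({1,2,3,4} : Finset ℕ)).2 = 0 := by
      have h := hperm (Icc 1 5) ⟨subset_rfl, by decide⟩ (1, 3)
        ⟨by decide, by decide, by decide⟩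
      rwa [phiE13] at h
    have E14 : -(c ({1,3,4,5} : Finset ℕ)).1 + (c ({1,3,4,5} : Finset ℕ)).2
        + (c ({1,2,4,5} : Finset ℕ)).1 - (c ({1,2,4,5} : Finset ℕ)).2
        - (c ({1,2,3,4} : Finset ℕ)).1 = 0 := by
      have h := hperm (Icc 1 5) ⟨subset_rfl, by decide⟩ (1, 4)
        ⟨by decide, by decide, by decide⟩
      rwa [phiE14] at h
    have E23 : (c ({2,3,4,5} : Finset ℕ)).2 + (c ({1,2,3,5} : Finset ℕ)).1
        - (c ({1,2,3,4} : Finset ℕ)).1 = 0 := by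
      have h := hperm (Icc 1 5) ⟨subset_rfl, by decide⟩ (2, 3)
        ⟨by decide, by decide, by decide⟩
      rwa [phiE23] at h
    have E24 : (c ({2,3,4,5} : Finset ℕ)).1 - (c ({2,3,4,5} : Finset ℕ)).2
        - (c ({1,2,4,5} : Finset ℕ)).1 + (c ({1,2,3,4} : Finset ℕ)).1
        + (c ({1,2,3,4} : Finset ℕ)).2 = 0 := by
      have h := hperm (Icc 1 5) ⟨subset_rfl, by decide⟩ (2, 4)
        ⟨by decide, by decide, by decide⟩
      rwa [phiE24] at h
    have hrep : c =
        ((c ({1,2,3,5} : Finset ℕ)).1) • psiC F {t | t ⊆ Icc 1 5 ∧ t.card = 4} 1 2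
        + (-(c ({2,3,4,5} : Finset ℕ)).1 - (c ({1,2,3,4} : Finset ℕ)).2) •
            psiC F {t | t ⊆ Icc 1 5 ∧ t.card = 4} 1 4
        + (-(c ({2,3,4,5} : Finset ℕ)).1 + (c ({1,2,3,5} : Finset ℕ)).1
            - (c ({1,2,3,5} : Finset ℕ)).2 - (c ({1,2,3,4} : Finset ℕ)).1) •
            psiC F {t | t ⊆ Icc 1 5 ∧ t.card = 4} 1 5
        + ((c ({2,3,4,5} : Finset ℕ)).1 - (c ({1,2,3,5} : Finset ℕ)).1
            + (c ({1,2,3,4} : Finset ℕ)).1) •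
            psiC F {t | t ⊆ Icc 1 5 ∧ t.card = 4} 2 3
        + (-(c ({1,2,3,5} : Finset ℕ)).1 + (c ({1,2,3,4} : Finset ℕ)).1) •
            psiC F {t | t ⊆ Icc 1 5 ∧ t.card = 4} 2 4 := by
      funext t
      by_cases ht : t ∈ {t : Finset ℕ | t ⊆ Icc 1 5 ∧ t.card = 4}
      · have ht' : t ∈ ((Icc 1 5 : Finset ℕ).powersetCard 4) :=
          Finset.mem_powersetCard.2 ⟨ht.1, ht.2⟩
        rw [show ((Icc 1 5 : Finset ℕ).powersetCard 4)
            = ({({2,3,4,5} : Finset ℕ), {1,3,4,5}, {1,2,4,5}, {1,2,3,5}, {1,2,3,4}} :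
                Finset (Finset ℕ)) from by decide] at ht'
        fin_cases ht'
        · simp only [Pi.add_apply, Pi.smul_apply, pv12_1, pv14_1, pv15_1, pv23_1, pv24_1,
            Prod.smul_mk, Prod.mk_add_mk, smul_eq_mul, Prod.ext_iff]
          constructor
          · linear_combination (0 : F) * E12
          · linear_combination E23
        · simp only [Pi.add_apply, Pi.smul_apply, pv12_2, pv14_2, pv15_2, pv23_2, pv24_2,
            Prod.smul_mk, Prod.mk_add_mk, smul_eq_mul, Prod.ext_iff]
          constructor
          · linear_combination -E12 - E13 - E14 - E23 - E24
          · linear_combination -E13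
        · simp only [Pi.add_apply, Pi.smul_apply, pv12_3, pv14_3, pv15_3, pv23_3, pv24_3,
            Prod.smul_mk, Prod.mk_add_mk, smul_eq_mul, Prod.ext_iff]
          constructor
          · linear_combination -E23 - E24
          · linear_combination E12
        · simp only [Pi.add_apply, Pi.smul_apply, pv12_4, pv14_4, pv15_4, pv23_4, pv24_4,
            Prod.smul_mk, Prod.mk_add_mk, smul_eq_mul, Prod.ext_iff]
          constructor
          · linear_combination (0 : F) * E12
          · linear_combination (0 : F) * E12
        · simp only [Pi.add_apply, Pi.smul_apply, pv12_5, pv14_5, pv15_5, pv23_5, pv24_5,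
            Prod.smul_mk, Prod.mk_add_mk, smul_eq_mul, Prod.ext_iff]
          constructor
          · linear_combination (0 : F) * E12
          · linear_combination (0 : F) * E12
      · have h0 : c t = 0 := hsupp t ht
        simp only [Pi.add_apply, Pi.smul_apply, psiC, if_neg ht, smul_zero, add_zero, h0]
    rw [hrep]
    refine Submodule.add_mem _ (Submodule.add_mem _ (Submodule.add_mem _
      (Submodule.add_mem _ (Submodule.smul_mem _ _ (Submodule.subset_span ?_))
        (Submodule.smul_mem _ _ (Submodule.subset_span ?_)))
      (Submodule.smul_mem _ _ (Submodule.subset_span ?_)))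
      (Submodule.smul_mem _ _ (Submodule.subset_span ?_)))
      (Submodule.smul_mem _ _ (Submodule.subset_span ?_))
    · exact ⟨1, by decide, 2, by decide, by decide, rfl⟩
    · exact ⟨1, by decide, 4, by decide, by decide, rfl⟩
    · exact ⟨1, by decide, 5, by decide, by decide, rfl⟩
    · exact ⟨2, by decide, 3, by decide, by decide, rfl⟩
    · exact ⟨2, by decide, 4, by decide, by decide, rfl⟩

end
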